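/- (Subgradient bound, Lemma 3.2.) In the block composite setting, fix x ∈ E, a block index i, and β > 0. Let s₊ be a global minimizer over ℝ^{n_i} of q_β(s) = φ̄^i(s;x) + (β/2)‖s − x^i‖² and set x₊ = x[i↦s₊]. Let C ⊆ E be a convex set containing x and x₊, suppose ∇_i f is L^f_i-Lipschitz on C and ∇_i F is L^F_i-Lipschitz on C (operator norm), suppose ‖∇_i F(x)‖ ≤ M (operator norm), and assume φ(x₊) ≤ φ(x). Then there exists a subgradient v of g_i at s₊ (i.e. g_i(t) ≥ g_i(s₊) + ⟨v, t − s₊⟩ for all t) such that ‖∇_i f(x₊) + (∇_i F(x₊))^T ∇h(F(x₊)) + v‖ ≤ (L^f_i + L^F_i √(2 L_h (φ(x) − φ^*)) + β)‖x₊ − x‖ + (L_h M L^F_i/2)‖x₊ − x‖². -/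

import Mathlib

open scoped RealInnerProductSpace

/-- `upd x i s` is `x` with its `i`-th block replaced by `s`, in the Euclidean
product space `E = ℝ^{n 0} × ⋯ × ℝ^{n (b-1)}`. -/
noncomputable def upd {b : ℕ} {n : Fin b → ℕ}
    (x : PiLp 2 (fun i => EuclideanSpace ℝ (Fin (n i)))) (i : Fin b)
    (s : EuclideanSpace ℝ (Fin (n i))) :
    PiLp 2 (fun i => EuclideanSpace ℝ (Fin (n i))) :=
  WithLp.toLp 2 (Function.update x i s)


section helpers

lemma ftc_bound {V : Type*} [NormedAddCommGroup V] [NormedSpace ℝ V] [CompleteSpace V]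
    (G : ℝ → V) (G' : ℝ → V) (K : ℝ)
    (hderiv : ∀ t ∈ Set.Icc (0:ℝ) 1, HasDerivAt G (G' t) t)
    (hcont : ContinuousOn G' (Set.Icc 0 1))
    (hbound : ∀ t ∈ Set.Icc (0:ℝ) 1, ‖G' t‖ ≤ K * t) :
    ‖G 1 - G 0‖ ≤ K / 2 := by
  have huIcc : Set.uIcc (0:ℝ) 1 = Set.Icc 0 1 := by
    rw [Set.uIcc_of_le]; norm_num
  have hint : IntervalIntegrable G' MeasureTheory.volume 0 1 := by
    apply ContinuousOn.intervalIntegrable; rwa [huIcc]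
  have heq : ∫ t in (0:ℝ)..1, G' t = G 1 - G 0 :=
    intervalIntegral.integral_eq_sub_of_hasDerivAt (fun t ht => hderiv t (huIcc ▸ ht)) hint
  rw [← heq]
  have h1 : ‖∫ t in (0:ℝ)..1, G' t‖ ≤ ∫ t in (0:ℝ)..1, ‖G' t‖ :=
    intervalIntegral.norm_integral_le_integral_norm (by norm_num)
  have h2 : ∫ t in (0:ℝ)..1, ‖G' t‖ ≤ ∫ t in (0:ℝ)..1, K * t := by
    apply intervalIntegral.integral_mono_on (by norm_num)
    · apply ContinuousOn.intervalIntegrable; rw [huIcc]; exact hcont.norm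
    · exact (continuous_const.mul continuous_id).intervalIntegrable 0 1
    · intro t ht; exact hbound t ht
  have h3 : ∫ t in (0:ℝ)..1, K * t = K / 2 := by
    rw [intervalIntegral.integral_const_mul, integral_id]; ring
  linarith

lemma grad_norm_sq_le {k : ℕ} (h : EuclideanSpace ℝ (Fin k) → ℝ) (Lh : ℝ) (hLh : 0 < Lh)
    (gradh : EuclideanSpace ℝ (Fin k) → EuclideanSpace ℝ (Fin k))
    (hgradh : ∀ u, HasGradientAt h (gradh u) u)
    (hgradhLip : ∀ u v, ‖gradh u - gradh v‖ ≤ Lh * ‖u - v‖)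
    (hstar : ℝ) (hhstar : ∀ u, hstar ≤ h u) (u : EuclideanSpace ℝ (Fin k)) :
    ‖gradh u‖ ^ 2 ≤ 2 * Lh * (h u - hstar) := by
  have hlip : LipschitzWith (Real.toNNReal Lh) gradh := by
    apply LipschitzWith.of_dist_le_mul
    intro a b
    rw [dist_eq_norm, dist_eq_norm, Real.coe_toNNReal _ hLh.le]
    exact hgradhLip a b
  -- descent lemma
  have descent : ∀ w : EuclideanSpace ℝ (Fin k),
      h (u + w) ≤ h u + ⟪gradh u, w⟫ + Lh / 2 * ‖w‖ ^ 2 := by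
    intro w
    set G : ℝ → ℝ := fun t => h (u + t • w) - t * ⟪gradh u, w⟫ with hG
    set G' : ℝ → ℝ := fun t => ⟪gradh (u + t • w), w⟫ - ⟪gradh u, w⟫ with hG'
    have hpath : ∀ t : ℝ, HasDerivAt (fun t : ℝ => u + t • w) w t := fun t => by
      simpa using ((hasDerivAt_id t).smul_const w).const_add u
    have hderiv : ∀ t ∈ Set.Icc (0:ℝ) 1, HasDerivAt G (G' t) t := by
      intro t _
      have h1 : HasDerivAt (fun t : ℝ => h (u + t • w)) ⟪gradh (u + t • w), w⟫ t := by
        have := ((hgradh (u + t • w)).hasFDerivAt.comp_hasDerivAt t (hpath t))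
        simpa [Function.comp_def] using this
      exact h1.sub (hasDerivAt_mul_const _)
    have hcont2 : ContinuousOn G' (Set.Icc 0 1) := by
      apply Continuous.continuousOn
      have hc : Continuous fun t : ℝ => gradh (u + t • w) :=
        hlip.continuous.comp (by continuity)
      exact (hc.inner continuous_const).sub continuous_const
    have hbound : ∀ t ∈ Set.Icc (0:ℝ) 1, ‖G' t‖ ≤ (Lh * ‖w‖ ^ 2) * t := by
      intro t ht
      have he : G' t = ⟪gradh (u + t • w) - gradh u, w⟫ := by
        rw [hG', inner_sub_left]
      rw [he, Real.norm_eq_abs]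
      calc |⟪gradh (u + t • w) - gradh u, w⟫| ≤ ‖gradh (u + t • w) - gradh u‖ * ‖w‖ :=
            abs_real_inner_le_norm _ _
        _ ≤ (Lh * ‖u + t • w - u‖) * ‖w‖ :=
            mul_le_mul_of_nonneg_right (hgradhLip _ _) (norm_nonneg _)
        _ = Lh * ‖w‖ ^ 2 * t := by
            rw [add_sub_cancel_left, norm_smul, Real.norm_eq_abs, abs_of_nonneg ht.1]; ring
    have hftc := ftc_bound G G' (Lh * ‖w‖ ^ 2) hderiv hcont2 hbound
    have hG1 : G 1 = h (u + w) - ⟪gradh u, w⟫ := by simp [hG]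
    have hG0 : G 0 = h u := by simp [hG]
    rw [hG1, hG0, Real.norm_eq_abs] at hftc
    have habs := abs_le.mp hftc
    have := habs.2
    nlinarith [sq_nonneg ‖w‖]
  -- apply with w = -(Lh⁻¹) • gradh u
  have key := descent (-(Lh⁻¹ • gradh u))
  have h1 : ⟪gradh u, -(Lh⁻¹ • gradh u)⟫ = -(Lh⁻¹ * ‖gradh u‖ ^ 2) := by
    rw [inner_neg_right, real_inner_smul_right, real_inner_self_eq_norm_sq]
  have h2 : ‖-(Lh⁻¹ • gradh u)‖ ^ 2 = Lh⁻¹ ^ 2 * ‖gradh u‖ ^ 2 := by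
    rw [norm_neg, norm_smul, norm_inv, Real.norm_eq_abs, abs_of_pos hLh]; ring
  have h3 := hhstar (u + -(Lh⁻¹ • gradh u))
  rw [h1, h2] at key
  have hLh' : Lh ≠ 0 := hLh.ne'
  have hcoef : -(Lh⁻¹ * ‖gradh u‖ ^ 2) + Lh / 2 * (Lh⁻¹ ^ 2 * ‖gradh u‖ ^ 2)
      = -(‖gradh u‖ ^ 2 / (2 * Lh)) := by field_simp; ring
  have hmain : ‖gradh u‖ ^ 2 / (2 * Lh) ≤ h u - hstar := by linarith
  calc ‖gradh u‖ ^ 2 = ‖gradh u‖ ^ 2 / (2 * Lh) * (2 * Lh) := by field_simp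
    _ ≤ (h u - hstar) * (2 * Lh) := by
        exact mul_le_mul_of_nonneg_right hmain (by positivity)
    _ = 2 * Lh * (h u - hstar) := by ring

variable {b : ℕ} {n : Fin b → ℕ}

lemma upd_sub (x : PiLp 2 (fun i => EuclideanSpace ℝ (Fin (n i)))) (i : Fin b)
    (s s' : EuclideanSpace ℝ (Fin (n i))) :
    upd x i s - upd x i s' = (WithLp.equiv 2 _).symm (Pi.single i (s - s')) := by
  refine PiLp.ext fun j => ?_
  rcases eq_or_ne j i with rfl | hj
  · simp [upd, PiLp.sub_apply]
  · simp [upd, PiLp.sub_apply, Function.update_of_ne hj, Pi.single_eq_of_ne hj]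

lemma norm_upd_sub (x : PiLp 2 (fun i => EuclideanSpace ℝ (Fin (n i)))) (i : Fin b)
    (s s' : EuclideanSpace ℝ (Fin (n i))) :
    ‖upd x i s - upd x i s'‖ = ‖s - s'‖ := by
  rw [upd_sub, WithLp.equiv_symm_apply, PiLp.norm_toLp_single]

lemma upd_self (x : PiLp 2 (fun i => EuclideanSpace ℝ (Fin (n i)))) (i : Fin b) :
    upd x i (x i) = x := by simp [upd]

lemma upd_upd (x : PiLp 2 (fun i => EuclideanSpace ℝ (Fin (n i)))) (i : Fin b)
    (s t : EuclideanSpace ℝ (Fin (n i))) :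
    upd (upd x i s) i t = upd x i t := by
  simp [upd, Function.update_idem]

lemma upd_apply_self (x : PiLp 2 (fun i => EuclideanSpace ℝ (Fin (n i)))) (i : Fin b)
    (s : EuclideanSpace ℝ (Fin (n i))) : (upd x i s) i = s := by simp [upd]

lemma upd_line (x : PiLp 2 (fun i => EuclideanSpace ℝ (Fin (n i)))) (i : Fin b)
    (s : EuclideanSpace ℝ (Fin (n i))) (t : ℝ) :
    x + t • (upd x i s - x) = upd x i (x i + t • (s - x i)) := by
  refine PiLp.ext fun j => ?_
  rcases eq_or_ne j i with rfl | hj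
  · simp [upd, PiLp.add_apply, PiLp.smul_apply, PiLp.sub_apply]
  · simp [upd, PiLp.add_apply, PiLp.smul_apply, PiLp.sub_apply,
      Function.update_of_ne hj]

lemma exists_subgrad {V : Type*} [NormedAddCommGroup V] [InnerProductSpace ℝ V]
    (ψ : V → ℝ) (g : V → ℝ) (hgconv : ConvexOn ℝ Set.univ g)
    (sp : V) (Gψ : V)
    (hψ : ∀ d : V, HasDerivAt (fun lam : ℝ => ψ (sp + lam • d)) ⟪Gψ, d⟫ 0)
    (hmin : ∀ t, ψ sp + g sp ≤ ψ t + g t) :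
    ∀ t, g sp + ⟪-Gψ, t - sp⟫ ≤ g t := by
  intro t
  set d := t - sp with hd
  set p : ℝ → ℝ := fun lam => ψ (sp + lam • d) with hp
  have hten : Filter.Tendsto (slope p 0) (nhdsWithin 0 (Set.Ioi 0)) (nhds ⟪Gψ, d⟫) :=
    ((hasDerivAt_iff_tendsto_slope).mp (hψ d)).mono_left
      (nhdsWithin_mono 0 fun y hy => ne_of_gt hy)
  have hev : ∀ᶠ lam in nhdsWithin 0 (Set.Ioi 0), g sp - g t ≤ slope p 0 lam := by
    filter_upwards [Ioc_mem_nhdsGT_of_mem (Set.mem_Ico.mpr ⟨le_refl (0:ℝ), zero_lt_one⟩)]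
      with lam hlam
    obtain ⟨h0, h1⟩ := hlam
    have hconv : g (sp + lam • d) ≤ (1 - lam) * g sp + lam * g t := by
      have hcv := hgconv.2 (Set.mem_univ sp) (Set.mem_univ t)
        (by linarith : (0:ℝ) ≤ 1 - lam) h0.le (by ring)
      calc g (sp + lam • d) = g ((1 - lam) • sp + lam • t) := by
            congr 1; rw [sub_smul, one_smul, smul_sub]; abel
        _ ≤ (1 - lam) * g sp + lam * g t := hcv
    have hm := hmin (sp + lam • d)
    have hp0 : p 0 = ψ sp := by simp [hp]
    have hplam : p lam = ψ (sp + lam • d) := rfl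
    rw [slope_def_field, sub_zero, le_div_iff₀ h0, hp0, hplam]
    nlinarith
  have hge : g sp - g t ≤ ⟪Gψ, d⟫ := ge_of_tendsto hten hev
  have : ⟪-Gψ, t - sp⟫ = -⟪Gψ, d⟫ := by rw [inner_neg_left, hd]
  linarith [this]

end helpers

set_option maxHeartbeats 1000000 in
/-- subgradient bound, Lemma 3.2: at a global minimizer `sp` of the
regularized block model, with `x₊ = x[i ↦ sp]` and `φ(x₊) ≤ φ(x)`, there is a
subgradient `v` of `g_i` at `sp` with
`‖∇_i f(x₊) + (∇_i F(x₊))ᵀ ∇h(F(x₊)) + v‖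
  ≤ (L^f_i + L^F_i √(2L_h(φ(x) − φ^*)) + β)‖x₊ − x‖ + (L_h M L^F_i/2)‖x₊ − x‖²`. -/
theorem subgradient_bound
    {b m : ℕ} (hb : 0 < b) (hm : 0 < m) {n : Fin b → ℕ} (hn : ∀ i, 0 < n i)
    (f : PiLp 2 (fun i => EuclideanSpace ℝ (Fin (n i))) → ℝ)
    (hf : Differentiable ℝ f)
    (F : PiLp 2 (fun i => EuclideanSpace ℝ (Fin (n i))) → EuclideanSpace ℝ (Fin m))
    (hF : Differentiable ℝ F)
    (h : EuclideanSpace ℝ (Fin m) → ℝ)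
    (hhconv : ConvexOn ℝ Set.univ h) (hhdiff : Differentiable ℝ h)
    (Lh : ℝ) (hLh : 0 < Lh)
    (gradh : EuclideanSpace ℝ (Fin m) → EuclideanSpace ℝ (Fin m))
    (hgradh : ∀ u, HasGradientAt h (gradh u) u)
    (hgradhLip : ∀ u v, ‖gradh u - gradh v‖ ≤ Lh * ‖u - v‖)
    (g : (i : Fin b) → EuclideanSpace ℝ (Fin (n i)) → ℝ)
    (hg : ∀ i, ConvexOn ℝ Set.univ (g i))
    -- lower bounds `f ≥ f^*`, `h ≥ h^*`, `Σᵢ gᵢ ≥ g^*`; `φ^* = f^* + h^* + g^*`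
    (fstar hstar gstar : ℝ)
    (hfstar : ∀ y, fstar ≤ f y) (hhstar : ∀ u, hstar ≤ h u)
    (hgstar : ∀ y : PiLp 2 (fun i => EuclideanSpace ℝ (Fin (n i))), gstar ≤ ∑ j, g j (y j))
    (x : PiLp 2 (fun i => EuclideanSpace ℝ (Fin (n i)))) (i : Fin b)
    (β Lf LF M : ℝ) (hβ : 0 < β)
    -- `gif y = ∇_i f(y)`, the gradient at `y^i` of `s ↦ f(y[i ↦ s])`
    (gif : PiLp 2 (fun i => EuclideanSpace ℝ (Fin (n i))) → EuclideanSpace ℝ (Fin (n i)))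
    (hgif : ∀ y, HasGradientAt (fun s => f (upd y i s)) (gif y) (y i))
    -- `GiF y = ∇_i F(y)`, the Fréchet derivative at `y^i` of `s ↦ F(y[i ↦ s])`
    (GiF : PiLp 2 (fun i => EuclideanSpace ℝ (Fin (n i))) →
      (EuclideanSpace ℝ (Fin (n i)) →L[ℝ] EuclideanSpace ℝ (Fin m)))
    (hGiF : ∀ y, HasFDerivAt (fun s => F (upd y i s)) (GiF y) (y i))
    -- `sp` is a global minimizer of `q_β(s) = φ̄^i(s;x) + (β/2)‖s − x^i‖²`
    (sp : EuclideanSpace ℝ (Fin (n i)))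
    (hmin : ∀ t,
      (f x + ⟪gif x, sp - x i⟫ + h (F x + GiF x (sp - x i)) + g i sp)
          + β / 2 * ‖sp - x i‖ ^ 2
        ≤ (f x + ⟪gif x, t - x i⟫ + h (F x + GiF x (t - x i)) + g i t)
          + β / 2 * ‖t - x i‖ ^ 2)
    -- `C` is a convex set containing `x` and `x₊ = x[i ↦ sp]`, on which the block
    -- gradients of `f` and `F` are Lipschitz
    (C : Set (PiLp 2 (fun i => EuclideanSpace ℝ (Fin (n i)))))
    (hC : Convex ℝ C) (hxC : x ∈ C) (hxpC : upd x i sp ∈ C)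
    (hgifLip : ∀ y ∈ C, ∀ z ∈ C, ‖gif y - gif z‖ ≤ Lf * ‖y - z‖)
    (hGiFLip : ∀ y ∈ C, ∀ z ∈ C, ‖GiF y - GiF z‖ ≤ LF * ‖y - z‖)
    -- operator-norm bound `‖∇_i F(x)‖ ≤ M`
    (hM : ‖GiF x‖ ≤ M)
    -- decrease assumption `φ(x₊) ≤ φ(x)`
    (hdec : f (upd x i sp) + h (F (upd x i sp)) + ∑ j, g j (upd x i sp j)
        ≤ f x + h (F x) + ∑ j, g j (x j)) :
    ∃ v : EuclideanSpace ℝ (Fin (n i)),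
      (∀ t, g i sp + ⟪v, t - sp⟫ ≤ g i t) ∧
      ‖gif (upd x i sp)
          + ContinuousLinearMap.adjoint (GiF (upd x i sp)) (gradh (F (upd x i sp)))
          + v‖
        ≤ (Lf + LF * Real.sqrt (2 * Lh *
              ((f x + h (F x) + ∑ j, g j (x j)) - (fstar + hstar + gstar))) + β)
            * ‖upd x i sp - x‖
          + Lh * M * LF / 2 * ‖upd x i sp - x‖ ^ 2 := by
  
  classical
  let l : EuclideanSpace ℝ (Fin m) := F x + GiF x (sp - x i)
  let Gψ : EuclideanSpace ℝ (Fin (n i)) :=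
    gif x + (ContinuousLinearMap.adjoint (GiF x)) (gradh l) + β • (sp - x i)
  -- Step A: subgradient property for v = -Gψ
  have hψder : ∀ d : EuclideanSpace ℝ (Fin (n i)),
      HasDerivAt (fun lam : ℝ =>
          f x + ⟪gif x, (sp + lam • d) - x i⟫
            + h (F x + GiF x ((sp + lam • d) - x i))
            + β / 2 * ‖(sp + lam • d) - x i‖ ^ 2)
        ⟪Gψ, d⟫ 0 := by
    intro d
    have path : HasDerivAt (fun lam : ℝ => (sp + lam • d) - x i) d 0 := by
      simpa using (((hasDerivAt_id (0:ℝ)).smul_const d).const_add sp).sub_const (x i)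
    have t1 : HasDerivAt (fun lam : ℝ => ⟪gif x, (sp + lam • d) - x i⟫)
        ⟪gif x, d⟫ 0 := by
      simpa [Function.comp_def] using (innerSL ℝ (gif x)).hasFDerivAt.comp_hasDerivAt 0 path
    have pathF : HasDerivAt (fun lam : ℝ => F x + GiF x ((sp + lam • d) - x i))
        (GiF x d) 0 := by
      simpa using ((GiF x).hasFDerivAt.comp_hasDerivAt 0 path).const_add (F x)
    have hq0 : F x + GiF x ((sp + (0:ℝ) • d) - x i) = l := by
      simp [l]
    have hfd : HasFDerivAt h (InnerProductSpace.toDual ℝ _ (gradh l))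
        (F x + GiF x ((sp + (0:ℝ) • d) - x i)) := by
      rw [hq0]; exact (hgradh l).hasFDerivAt
    have t2 : HasDerivAt
        (fun lam : ℝ => h (F x + GiF x ((sp + lam • d) - x i)))
        ⟪gradh l, GiF x d⟫ 0 := by
      simpa [Function.comp_def] using hfd.comp_hasDerivAt 0 pathF
    have poly : HasDerivAt
        (fun lam : ℝ => β / 2 * ‖sp - x i‖ ^ 2 + lam * (β * ⟪sp - x i, d⟫)
          + lam ^ 2 * (β / 2 * ‖d‖ ^ 2)) (β * ⟪sp - x i, d⟫) 0 := by
      have h1 : HasDerivAt (fun lam : ℝ => lam * (β * ⟪sp - x i, d⟫))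
          (β * ⟪sp - x i, d⟫) 0 := hasDerivAt_mul_const _
      have h2 : HasDerivAt (fun lam : ℝ => lam ^ 2 * (β / 2 * ‖d‖ ^ 2)) (0:ℝ) 0 := by
        simpa using (hasDerivAt_pow 2 (0:ℝ)).mul_const (β / 2 * ‖d‖ ^ 2)
      simpa [Pi.add_def] using (h1.const_add (β / 2 * ‖sp - x i‖ ^ 2)).add h2
    have hfe : (fun lam : ℝ => β / 2 * ‖(sp + lam • d) - x i‖ ^ 2)
        = fun lam : ℝ => β / 2 * ‖sp - x i‖ ^ 2 + lam * (β * ⟪sp - x i, d⟫)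
          + lam ^ 2 * (β / 2 * ‖d‖ ^ 2) := by
      funext lam
      have he : (sp + lam • d) - x i = (sp - x i) + lam • d := by abel
      rw [he, norm_add_sq_real, real_inner_smul_right, norm_smul, Real.norm_eq_abs,
        mul_pow, sq_abs]
      ring
    have t3 : HasDerivAt (fun lam : ℝ => β / 2 * ‖(sp + lam • d) - x i‖ ^ 2)
        (β * ⟪sp - x i, d⟫) 0 := by rw [hfe]; exact poly
    have hval : ⟪Gψ, d⟫ = ⟪gif x, d⟫ + ⟪gradh l, GiF x d⟫ + β * ⟪sp - x i, d⟫ := by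
      simp only [Gψ, inner_add_left, real_inner_smul_left,
        ContinuousLinearMap.adjoint_inner_left]
    rw [hval]
    exact ((t1.const_add (f x)).add t2).add t3
  have hsub : ∀ t, g i sp + ⟪-Gψ, t - sp⟫ ≤ g i t := by
    apply exists_subgrad
      (fun s => f x + ⟪gif x, s - x i⟫ + h (F x + GiF x (s - x i))
        + β / 2 * ‖s - x i‖ ^ 2) (g i) (hg i) sp Gψ hψder
    intro t
    have := hmin t
    linarith
  refine ⟨-Gψ, hsub, ?_⟩
  -- Step B: the norm bound
  have hra : ‖upd x i sp - x‖ = ‖sp - x i‖ := by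
    have e : upd x i sp - x = upd x i sp - upd x i (x i) := by rw [upd_self]
    rw [e, norm_upd_sub]
  have hLFr : 0 ≤ LF * ‖upd x i sp - x‖ :=
    le_trans (norm_nonneg _) (hGiFLip _ hxpC x hxC)
  have hM0 : 0 ≤ M := le_trans (norm_nonneg _) hM
  have hD : 0 ≤ (f x + h (F x) + ∑ j, g j (x j)) - (fstar + hstar + gstar) := by
    have h1 := hfstar x
    have h2 := hhstar (F x)
    have h3 := hgstar x
    linarith
  have hS : ‖gradh (F (upd x i sp))‖ ≤ Real.sqrt (2 * Lh *
      ((f x + h (F x) + ∑ j, g j (x j)) - (fstar + hstar + gstar))) := by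
    have h1 := grad_norm_sq_le h Lh hLh gradh hgradh hgradhLip hstar hhstar (F (upd x i sp))
    have h2 : h (F (upd x i sp)) - hstar
        ≤ (f x + h (F x) + ∑ j, g j (x j)) - (fstar + hstar + gstar) := by
      have h3 := hfstar (upd x i sp)
      have h4 := hgstar (upd x i sp)
      linarith
    exact Real.le_sqrt_of_sq_le (by nlinarith)
  -- remainder bound for F
  have hrem : ‖F (upd x i sp) - l‖ ≤ LF / 2 * ‖upd x i sp - x‖ ^ 2 := by
    rcases eq_or_ne sp (x i) with hsp | hsp
    · have hx0 : upd x i sp = x := by rw [hsp, upd_self]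
      have hl0 : l = F x := by simp [l, hsp]
      rw [hx0, hl0]
      simp
    · have hrpos : 0 < ‖upd x i sp - x‖ := by
        rw [hra]; exact norm_pos_iff.mpr (sub_ne_zero.mpr hsp)
      have hLF : 0 ≤ LF := by
        by_contra hneg
        push_neg at hneg
        nlinarith
      set a0 : EuclideanSpace ℝ (Fin (n i)) := sp - x i with ha0
      have hderG : ∀ t ∈ Set.Icc (0:ℝ) 1,
          HasDerivAt (fun t : ℝ => F (upd x i (x i + t • a0)) - t • (GiF x a0))
            ((GiF (upd x i (x i + t • a0))) a0 - (GiF x) a0) t := by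
        intro t _
        have hHF0 := hGiF (upd x i (x i + t • a0))
        simp only [upd_upd, upd_apply_self] at hHF0
        have hpath : HasDerivAt (fun t : ℝ => x i + t • a0) a0 t := by
          simpa using ((hasDerivAt_id t).smul_const a0).const_add (x i)
        have h1 := hHF0.comp_hasDerivAt t hpath
        have h2 : HasDerivAt (fun t : ℝ => t • ((GiF x) a0)) ((GiF x) a0) t := by
          simpa using (hasDerivAt_id t).smul_const ((GiF x) a0)
        exact h1.sub h2
      have hmemC : ∀ t ∈ Set.Icc (0:ℝ) 1, upd x i (x i + t • a0) ∈ C := by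
        intro t ht
        have hline : upd x i (x i + t • a0) = (1 - t) • x + t • (upd x i sp) := by
          rw [← upd_line, smul_sub, sub_smul, one_smul]; abel
        rw [hline]
        exact hC hxC hxpC (by linarith [ht.2]) ht.1 (by ring)
      have hgamma : ∀ t : ℝ, upd x i (x i + t • a0) - x = t • (upd x i sp - x) := by
        intro t
        rw [← upd_line]; abel
      have hcontG : ContinuousOn
          (fun t : ℝ => (GiF (upd x i (x i + t • a0))) a0 - (GiF x) a0)
          (Set.Icc 0 1) := by
        have hlip : LipschitzOnWith (Real.toNNReal (LF * ‖a0‖ ^ 2))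
            (fun t : ℝ => (GiF (upd x i (x i + t • a0))) a0) (Set.Icc 0 1) := by
          apply LipschitzOnWith.of_dist_le_mul
          intro t ht t' ht'
          rw [dist_eq_norm, Real.dist_eq,
            Real.coe_toNNReal _ (by positivity : (0:ℝ) ≤ LF * ‖a0‖ ^ 2)]
          have e1 : (GiF (upd x i (x i + t • a0))) a0 - (GiF (upd x i (x i + t' • a0))) a0
              = (GiF (upd x i (x i + t • a0)) - GiF (upd x i (x i + t' • a0))) a0 := by
            rw [ContinuousLinearMap.sub_apply]
          rw [e1]
          calc ‖(GiF (upd x i (x i + t • a0)) - GiF (upd x i (x i + t' • a0))) a0‖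
              ≤ ‖GiF (upd x i (x i + t • a0)) - GiF (upd x i (x i + t' • a0))‖ * ‖a0‖ :=
                ContinuousLinearMap.le_opNorm _ _
            _ ≤ (LF * ‖upd x i (x i + t • a0) - upd x i (x i + t' • a0)‖) * ‖a0‖ :=
                mul_le_mul_of_nonneg_right
                  (hGiFLip _ (hmemC t ht) _ (hmemC t' ht')) (norm_nonneg _)
            _ ≤ LF * ‖a0‖ ^ 2 * |t - t'| := by
                rw [norm_upd_sub]
                have : (x i + t • a0) - (x i + t' • a0) = (t - t') • a0 := by
                  rw [sub_smul]; abel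
                rw [this, norm_smul, Real.norm_eq_abs]
                nlinarith [abs_nonneg (t - t'), norm_nonneg a0, sq_nonneg ‖a0‖]
        exact (hlip.continuousOn).sub continuousOn_const
      have hboundG : ∀ t ∈ Set.Icc (0:ℝ) 1,
          ‖(GiF (upd x i (x i + t • a0))) a0 - (GiF x) a0‖ ≤ (LF * ‖a0‖ ^ 2) * t := by
        intro t ht
        have e1 : (GiF (upd x i (x i + t • a0))) a0 - (GiF x) a0
            = (GiF (upd x i (x i + t • a0)) - GiF x) a0 := by
          rw [ContinuousLinearMap.sub_apply]
        rw [e1]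
        calc ‖(GiF (upd x i (x i + t • a0)) - GiF x) a0‖
            ≤ ‖GiF (upd x i (x i + t • a0)) - GiF x‖ * ‖a0‖ :=
              ContinuousLinearMap.le_opNorm _ _
          _ ≤ (LF * ‖upd x i (x i + t • a0) - x‖) * ‖a0‖ :=
              mul_le_mul_of_nonneg_right (hGiFLip _ (hmemC t ht) x hxC) (norm_nonneg _)
          _ = (LF * ‖a0‖ ^ 2) * t := by
              rw [hgamma t, norm_smul, Real.norm_eq_abs, abs_of_nonneg ht.1, hra]
              ring
      have hftc := ftc_bound _ _ (LF * ‖a0‖ ^ 2) hderG hcontG hboundG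
      have hG1 : F (upd x i (x i + (1:ℝ) • a0)) - (1:ℝ) • (GiF x a0)
          = F (upd x i sp) - GiF x a0 := by
        have e : x i + (1:ℝ) • a0 = sp := by rw [one_smul, ha0]; abel
        rw [e, one_smul]
      have hG0 : F (upd x i (x i + (0:ℝ) • a0)) - (0:ℝ) • (GiF x a0) = F x := by
        rw [zero_smul, zero_smul, add_zero, upd_self, sub_zero]
      rw [hG1, hG0] at hftc
      have e2 : F (upd x i sp) - GiF x a0 - F x = F (upd x i sp) - l := by
        rw [ha0]; simp only [l]; abel
      rw [e2] at hftc
      calc ‖F (upd x i sp) - l‖ ≤ LF * ‖a0‖ ^ 2 / 2 := hftc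
        _ = LF / 2 * ‖upd x i sp - x‖ ^ 2 := by rw [ha0, ← hra]; ring
  -- assemble
  have hWeq : gif (upd x i sp)
      + (ContinuousLinearMap.adjoint (GiF (upd x i sp))) (gradh (F (upd x i sp))) + -Gψ
      = (gif (upd x i sp) - gif x)
        + (ContinuousLinearMap.adjoint (GiF (upd x i sp) - GiF x)) (gradh (F (upd x i sp)))
        + (ContinuousLinearMap.adjoint (GiF x)) (gradh (F (upd x i sp)) - gradh l)
        - β • (sp - x i) := by
    simp only [Gψ, map_sub, ContinuousLinearMap.sub_apply]
    abel
  rw [hWeq]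
  have nA : ‖gif (upd x i sp) - gif x‖ ≤ Lf * ‖upd x i sp - x‖ := hgifLip _ hxpC x hxC
  have nB : ‖(ContinuousLinearMap.adjoint (GiF (upd x i sp) - GiF x))
        (gradh (F (upd x i sp)))‖
      ≤ (LF * ‖upd x i sp - x‖) * Real.sqrt (2 * Lh *
          ((f x + h (F x) + ∑ j, g j (x j)) - (fstar + hstar + gstar))) := by
    calc ‖(ContinuousLinearMap.adjoint (GiF (upd x i sp) - GiF x)) (gradh (F (upd x i sp)))‖
        ≤ ‖ContinuousLinearMap.adjoint (GiF (upd x i sp) - GiF x)‖ * ‖gradh (F (upd x i sp))‖ :=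
          ContinuousLinearMap.le_opNorm _ _
      _ = ‖GiF (upd x i sp) - GiF x‖ * ‖gradh (F (upd x i sp))‖ := by
          rw [LinearIsometryEquiv.norm_map]
      _ ≤ _ := mul_le_mul (hGiFLip _ hxpC x hxC) hS (norm_nonneg _) hLFr
  have nC : ‖(ContinuousLinearMap.adjoint (GiF x)) (gradh (F (upd x i sp)) - gradh l)‖
      ≤ M * (Lh * (LF / 2 * ‖upd x i sp - x‖ ^ 2)) := by
    calc ‖(ContinuousLinearMap.adjoint (GiF x)) (gradh (F (upd x i sp)) - gradh l)‖
        ≤ ‖ContinuousLinearMap.adjoint (GiF x)‖ * ‖gradh (F (upd x i sp)) - gradh l‖ :=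
          ContinuousLinearMap.le_opNorm _ _
      _ = ‖GiF x‖ * ‖gradh (F (upd x i sp)) - gradh l‖ := by
          rw [LinearIsometryEquiv.norm_map]
      _ ≤ M * (Lh * (LF / 2 * ‖upd x i sp - x‖ ^ 2)) := by
          apply mul_le_mul hM _ (norm_nonneg _) hM0
          calc ‖gradh (F (upd x i sp)) - gradh l‖ ≤ Lh * ‖F (upd x i sp) - l‖ :=
                hgradhLip _ _
            _ ≤ Lh * (LF / 2 * ‖upd x i sp - x‖ ^ 2) :=
                mul_le_mul_of_nonneg_left hrem hLh.le
  have nD : ‖β • (sp - x i)‖ = β * ‖upd x i sp - x‖ := by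
    rw [norm_smul, Real.norm_eq_abs, abs_of_pos hβ, hra]
  calc ‖(gif (upd x i sp) - gif x)
        + (ContinuousLinearMap.adjoint (GiF (upd x i sp) - GiF x)) (gradh (F (upd x i sp)))
        + (ContinuousLinearMap.adjoint (GiF x)) (gradh (F (upd x i sp)) - gradh l)
        - β • (sp - x i)‖
      ≤ ‖(gif (upd x i sp) - gif x)
        + (ContinuousLinearMap.adjoint (GiF (upd x i sp) - GiF x)) (gradh (F (upd x i sp)))
        + (ContinuousLinearMap.adjoint (GiF x)) (gradh (F (upd x i sp)) - gradh l)‖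
        + ‖β • (sp - x i)‖ := norm_sub_le _ _
    _ ≤ ‖gif (upd x i sp) - gif x‖
        + ‖(ContinuousLinearMap.adjoint (GiF (upd x i sp) - GiF x)) (gradh (F (upd x i sp)))‖
        + ‖(ContinuousLinearMap.adjoint (GiF x)) (gradh (F (upd x i sp)) - gradh l)‖
        + ‖β • (sp - x i)‖ := by
          have := norm_add_le (gif (upd x i sp) - gif x
            + (ContinuousLinearMap.adjoint (GiF (upd x i sp) - GiF x)) (gradh (F (upd x i sp))))
            ((ContinuousLinearMap.adjoint (GiF x)) (gradh (F (upd x i sp)) - gradh l))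
          have h2 := norm_add_le (gif (upd x i sp) - gif x)
            ((ContinuousLinearMap.adjoint (GiF (upd x i sp) - GiF x)) (gradh (F (upd x i sp))))
          linarith
    _ ≤ (Lf + LF * Real.sqrt (2 * Lh *
            ((f x + h (F x) + ∑ j, g j (x j)) - (fstar + hstar + gstar))) + β)
          * ‖upd x i sp - x‖
        + Lh * M * LF / 2 * ‖upd x i sp - x‖ ^ 2 := by
        rw [nD] at *
        nlinarith [nA, nB, nC]
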